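/- Let h : ℤ^{M+N} → ℝ_{≥0} satisfy h(x)h(y) ≤ h(x∧y)h(x∨y) for all x, y ∈ ℤ^{M+N} (log-supermodularity). Define h̄ : ℤ^M → ℝ_{≥0} by h̄(x) = Σ_{y ∈ ℤ^N} h(x,y), assuming all these sums are finite. Then h̄(x)h̄(y) ≤ h̄(x∧y)h̄(x∨y) for all x, y ∈ ℤ^M. -/
import Mathlib

open Finset Filter Topology

lemma append_inf {M N : ℕ} (x y : Fin M → ℤ) (a b : Fin N → ℤ) :
    Fin.append x a ⊓ Fin.append y b = Fin.append (x ⊓ y) (a ⊓ b) := by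
  funext i
  refine Fin.addCases (fun i => ?_) (fun i => ?_) i <;>
    simp [Fin.append_left, Fin.append_right]

lemma append_sup {M N : ℕ} (x y : Fin M → ℤ) (a b : Fin N → ℤ) :
    Fin.append x a ⊔ Fin.append y b = Fin.append (x ⊔ y) (a ⊔ b) := by
  funext i
  refine Fin.addCases (fun i => ?_) (fun i => ?_) i <;>
    simp [Fin.append_left, Fin.append_right]

/-- Marginalization of a nonnegative log-supermodular function on ℤ^{M+N} over the
last N coordinates is log-supermodular on ℤ^M (Ahlswede–Daykin). -/
theorem stmt13 (M N : ℕ) (h : (Fin (M + N) → ℤ) → ℝ)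
    (hpos : ∀ u, 0 ≤ h u)
    (hlsm : ∀ u v, h u * h v ≤ h (u ⊓ v) * h (u ⊔ v))
    (hsum : ∀ x : Fin M → ℤ, Summable fun y : Fin N → ℤ => h (Fin.append x y))
    (x y : Fin M → ℤ) :
    (∑' y' : Fin N → ℤ, h (Fin.append x y')) * (∑' y' : Fin N → ℤ, h (Fin.append y y')) ≤
    (∑' y' : Fin N → ℤ, h (Fin.append (x ⊓ y) y')) *
      (∑' y' : Fin N → ℤ, h (Fin.append (x ⊔ y) y')) := by
  classical
  set f₁ : (Fin N → ℤ) → ℝ := fun a => h (Fin.append x a) with hf₁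
  set f₂ : (Fin N → ℤ) → ℝ := fun a => h (Fin.append y a) with hf₂
  set f₃ : (Fin N → ℤ) → ℝ := fun a => h (Fin.append (x ⊓ y) a) with hf₃
  set f₄ : (Fin N → ℤ) → ℝ := fun a => h (Fin.append (x ⊔ y) a) with hf₄
  have key : ∀ a b, f₁ a * f₂ b ≤ f₃ (a ⊓ b) * f₄ (a ⊔ b) := by
    intro a b
    have := hlsm (Fin.append x a) (Fin.append y b)
    rwa [append_inf, append_sup] at this
  set C : ℝ := (∑' a, f₃ a) * ∑' a, f₄ a with hC
  have step : ∀ s t : Finset (Fin N → ℤ),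
      (∑ a ∈ s, f₁ a) * ∑ a ∈ t, f₂ a ≤ C := by
    intro s t
    refine le_trans (four_functions_theorem f₁ f₂ f₃ f₄ (fun a => hpos _)
      (fun a => hpos _) (fun a => hpos _) (fun a => hpos _) key s t) ?_
    exact mul_le_mul (Summable.sum_le_tsum _ (fun a _ => hpos _) (hsum _))
      (Summable.sum_le_tsum _ (fun a _ => hpos _) (hsum _))
      (Finset.sum_nonneg fun a _ => hpos _) (tsum_nonneg fun a => hpos _)
  have h1 : HasSum f₁ (∑' a, f₁ a) := (hsum x).hasSum
  have h2 : HasSum f₂ (∑' a, f₂ a) := (hsum y).hasSum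
  have stepA : ∀ t : Finset (Fin N → ℤ), (∑' a, f₁ a) * ∑ a ∈ t, f₂ a ≤ C := by
    intro t
    exact le_of_tendsto (h1.mul_const _) (Eventually.of_forall fun s => step s t)
  exact le_of_tendsto (h2.const_mul _) (Eventually.of_forall fun t => stepA t)
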